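/- Let E be a finite directed graph with vertex matrix A(v,w) = |vE¹w| (number of edges with range v and source w), let β > log ρ(A), and for v ∈ V set y_v = ∑_{μ ∈ E* with s(μ)=v} exp(-β |μ|), the sum over all finite paths with source v. Then this series converges and y_v = ∑_{w} ((I - exp(-β)A)⁻¹)(w,v) ≥ 1. -/

import Mathlib

open Filter Topology ENNReal Pointwise

section Aux
attribute [local instance] Matrix.linftyOpNormedRing Matrix.linftyOpNormedAlgebra

lemma aux_summable_pow {V : Type*} [Fintype V] [DecidableEq V] [Nonempty V]
    (M : Matrix V V ℂ) (h : ∀ z ∈ spectrum ℂ M, ‖z‖₊ < (1 : NNReal)) :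
    Summable (fun n : ℕ => M ^ n) := by
  have hcomp : CompleteSpace (Matrix V V ℂ) := FiniteDimensional.complete ℂ _
  have hsr : spectralRadius ℂ M < 1 := spectrum.spectralRadius_lt_of_forall_lt M h
  obtain ⟨r, hr1, hr2⟩ := ENNReal.lt_iff_exists_nnreal_btwn.mp hsr
  have hr2' : (r : ℝ) < 1 := by exact_mod_cast hr2
  have hg := spectrum.pow_nnnorm_pow_one_div_tendsto_nhds_spectralRadius M
  have hev : ∀ᶠ n : ℕ in atTop, (‖M ^ n‖₊ : ℝ≥0∞) ^ (1 / (n : ℝ)) < r :=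
    hg.eventually (gt_mem_nhds hr1)
  have hev2 : ∀ᶠ n : ℕ in atTop, ‖M ^ n‖ ≤ (r : ℝ) ^ n := by
    filter_upwards [hev, eventually_ge_atTop 1] with n hn hn1
    have hne : (n : ℝ) ≠ 0 := by positivity
    have : ((‖M ^ n‖₊ : ℝ≥0∞) ^ (1 / (n : ℝ))) ^ (n : ℝ) ≤ (r : ℝ≥0∞) ^ (n : ℝ) :=
      ENNReal.rpow_le_rpow hn.le (by positivity)
    rw [← ENNReal.rpow_mul, one_div, inv_mul_cancel₀ hne, ENNReal.rpow_one,
      ENNReal.rpow_natCast] at this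
    have h2 : ‖M ^ n‖₊ ≤ r ^ n := by exact_mod_cast this
    calc ‖M ^ n‖ = (‖M ^ n‖₊ : ℝ) := rfl
    _ ≤ ((r ^ n : NNReal) : ℝ) := by exact_mod_cast h2
    _ = (r : ℝ) ^ n := by push_cast; ring
  exact Summable.of_norm_bounded_eventually_nat
    (summable_geometric_of_lt_one r.coe_nonneg hr2')
    (by simpa using hev2)

end Aux

/-- Let `E` be a finite directed graph with vertex matrix `A(v,w) = |vE¹w|` (over `ℝ`),
and let `β` satisfy `β > log ρ(A)`, expressed as `exp(-β)|μ| < 1` for every complex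
eigenvalue `μ` of `A`.  Since paths of length `n` from `v` to `w` (with source `v`,
range `w`) are counted by `Aⁿ(w,v)`, the series
`y_v = ∑_{μ ∈ E*v} exp(-β|μ|) = ∑_{n} ∑_w exp(-βn) Aⁿ(w,v)` converges, with sum
`∑_w ((I - exp(-β)A)⁻¹)(w,v)`, and this sum is at least `1`. -/
theorem stmt10 {V E : Type*} [Fintype V] [DecidableEq V] [Fintype E] [DecidableEq E]
    (r s : E → V) (A : Matrix V V ℝ)
    (hA : ∀ v w : V, A v w = (Fintype.card {e : E // r e = v ∧ s e = w} : ℝ))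
    (β : ℝ)
    (hβ : ∀ μ ∈ spectrum ℂ (A.map (Complex.ofReal : ℝ → ℂ)),
      Real.exp (-β) * ‖μ‖ < 1) :
    ∀ v : V,
      HasSum (fun n : ℕ => ∑ w : V, Real.exp (-β * n) * (A ^ n) w v)
        (∑ w : V, (1 - Real.exp (-β) • A)⁻¹ w v) ∧
      1 ≤ ∑ w : V, (1 - Real.exp (-β) • A)⁻¹ w v := by
  intro v
  have hV : Nonempty V := ⟨v⟩
  have hc0 : (0:ℝ) < Real.exp (-β) := Real.exp_pos _
  set B : Matrix V V ℝ := Real.exp (-β) • A with hB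
  have hmap : B.map (Complex.ofReal) = (Real.exp (-β) : ℂ) • A.map Complex.ofReal := by
    ext i j; simp [hB, Matrix.map_apply, Matrix.smul_apply]
  have hspec : ∀ z ∈ spectrum ℂ (B.map Complex.ofReal), ‖z‖₊ < (1 : NNReal) := by
    intro z hz
    rw [hmap] at hz
    set u : ℂˣ := Units.mk0 (Real.exp (-β) : ℂ) (by exact_mod_cast hc0.ne') with hu
    have hz2 : z ∈ u • spectrum ℂ (A.map Complex.ofReal) := by
      rw [← spectrum.unit_smul_eq_smul]; exact hz
    obtain ⟨μ, hμ, hzμ⟩ := hz2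
    have hlt : ‖z‖ < 1 := by
      rw [← hzμ]
      have := hβ μ hμ
      simpa [hu, Units.smul_def, norm_smul, Complex.norm_real,
        Real.norm_of_nonneg hc0.le, Complex.norm_exp] using this
    exact_mod_cast hlt
  have hsumc : Summable (fun n : ℕ => (B.map Complex.ofReal) ^ n) :=
    aux_summable_pow _ hspec
  have hpowmap : ∀ n : ℕ, (B.map Complex.ofReal) ^ n = (B ^ n).map Complex.ofReal := by
    intro n
    exact (map_pow (Complex.ofRealHom.mapMatrix) B n).symm
  have hre : ∀ w u : V, Summable (fun n : ℕ => (B ^ n) w u) := by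
    intro w u
    have h1 := (Pi.summable.mp ((Pi.summable.mp hsumc) w)) u
    simp only [hpowmap, Matrix.map_apply] at h1
    exact Complex.summable_ofReal.mp h1
  have hsumR : Summable (fun n : ℕ => B ^ n) :=
    Pi.summable.mpr fun w => Pi.summable.mpr fun u => hre w u
  set S : Matrix V V ℝ := ∑' n : ℕ, B ^ n with hSdef
  have hS : HasSum (fun n : ℕ => B ^ n) S := hsumR.hasSum
  have hS1 : HasSum (fun n : ℕ => B ^ (n + 1)) (S - 1) := by
    simpa using (hasSum_nat_add_iff' 1).mpr hS
  have hBS : B * S = S - 1 :=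
    HasSum.unique (by simpa [← pow_succ'] using hS.mul_left B) hS1
  have hSB : S * B = S - 1 :=
    HasSum.unique (by simpa [← pow_succ] using hS.mul_right B) hS1
  have hright : (1 - B) * S = 1 := by
    rw [sub_mul, one_mul, hBS]; exact sub_sub_cancel S 1
  have hinv : (1 - B)⁻¹ = S := Matrix.inv_eq_right_inv hright
  have hA0 : ∀ w u, 0 ≤ A w u := fun w u => by rw [hA]; positivity
  have hAn : ∀ (n : ℕ) (w u : V), 0 ≤ (A ^ n) w u := by
    intro n
    induction n with
    | zero =>
      intro w u; rw [pow_zero]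
      by_cases h : w = u <;> simp [Matrix.one_apply, h]
    | succ n ih =>
      intro w u; rw [pow_succ, Matrix.mul_apply]
      exact Finset.sum_nonneg fun k _ => mul_nonneg (ih w k) (hA0 k u)
  have hterm : ∀ (n : ℕ) (w : V), Real.exp (-β * n) * (A ^ n) w v = (B ^ n) w v := by
    intro n w
    rw [hB, smul_pow, Matrix.smul_apply, smul_eq_mul]
    congr 1
    rw [← Real.exp_nat_mul]
    ring_nf
  have hSwv : ∀ w : V, HasSum (fun n : ℕ => (B ^ n) w v) (S w v) := by
    intro w
    exact (Pi.hasSum.mp ((Pi.hasSum.mp hS) w)) v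
  have hmain : HasSum (fun n : ℕ => ∑ w : V, Real.exp (-β * n) * (A ^ n) w v)
      (∑ w : V, (1 - B)⁻¹ w v) := by
    rw [hinv]
    have := hasSum_sum (f := fun w (n : ℕ) => (B ^ n) w v)
      (s := Finset.univ) (a := fun w => S w v) (fun w _ => hSwv w)
    convert this using 2 with n
    exact Finset.sum_congr rfl fun w _ => hterm n w
  refine ⟨hmain, ?_⟩
  have h0 : (∑ w : V, Real.exp (-β * (0:ℕ)) * (A ^ 0) w v) = 1 := by
    simp [Matrix.one_apply]
  calc (1:ℝ) = ∑ w : V, Real.exp (-β * (0:ℕ)) * (A ^ 0) w v := h0.symm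
  _ ≤ ∑ w : V, (1 - B)⁻¹ w v :=
      le_hasSum hmain 0 fun n _ =>
        Finset.sum_nonneg fun w _ =>
          mul_nonneg (Real.exp_nonneg _) (hAn n w v)
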